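/- (Theorem 4) Let ρ be a fully separable density matrix on ℂ^{d₁} ⊗ ⋯ ⊗ ℂ^{d_n}, i.e. a finite convex combination of pure states of the form |ψ₁⟩⟨ψ₁| ⊗ ⋯ ⊗ |ψ_n⟩⟨ψ_n|. Then for every nonempty proper subset A ⊂ {1,…,n}, the A-matricization of the full correlation tensor T_{i₁⋯i_n} = tr(ρ (λ^{(1)}_{i₁} ⊗ ⋯ ⊗ λ^{(n)}_{i_n})) satisfies ‖T_{\underline{A}}‖_tr ≤ Π_{j=1}^{n} √(2(d_j−1)/d_j). Consequently, any state violating this inequality for some matricization is not fully separable. -/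

import Mathlib

open Matrix BigOperators

noncomputable section

/-- The tensor (Kronecker) product of `n` local operators on
`ℂ^{d₁} ⊗ ⋯ ⊗ ℂ^{d_n}`, with the Hilbert space indexed by dependent functions. -/
def tensorOp {n : ℕ} {d : Fin n → ℕ}
    (A : ∀ j, Matrix (Fin (d j)) (Fin (d j)) ℂ) :
    Matrix (∀ j, Fin (d j)) (∀ j, Fin (d j)) ℂ :=
  fun r c => ∏ j, A j (r j) (c j)

/-- The `A`-matricization of an `n`-index tensor `v`: the real matrix whose row
index collects the indices in `A` and whose column index collects the remaining
indices. -/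
def matricize {n : ℕ} {m : Fin n → ℕ} (A : Finset (Fin n))
    (v : (∀ j, Fin (m j)) → ℝ) :
    Matrix ((j : {j // j ∈ A}) → Fin (m j.1)) ((j : {j // j ∉ A}) → Fin (m j.1)) ℝ :=
  fun r c => v fun j => if h : j ∈ A then r ⟨j, h⟩ else c ⟨j, h⟩

/-- The singular values of a real matrix `M`: the square roots of the
eigenvalues of `MᵀM = MᴴM`. -/
def singVals {I J : Type*} [Fintype I] [Fintype J] [DecidableEq J]
    (M : Matrix I J ℝ) : J → ℝ :=
  fun j => Real.sqrt ((Matrix.posSemidef_conjTranspose_mul_self M).1.eigenvalues j)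

/-- The trace norm: the sum of all singular values. -/
def traceNorm {I J : Type*} [Fintype I] [Fintype J] [DecidableEq J]
    (M : Matrix I J ℝ) : ℝ :=
  ∑ j, singVals M j



lemma sqrt_prod' {ι : Type*} (s : Finset ι) (f : ι → ℝ) (hf : ∀ i ∈ s, 0 ≤ f i) :
    Real.sqrt (∏ i ∈ s, f i) = ∏ i ∈ s, Real.sqrt (f i) := by
  induction s using Finset.cons_induction with
  | empty => simp
  | cons i s hi ih =>
    rw [Finset.prod_cons, Finset.prod_cons, Real.sqrt_mul (hf i (Finset.mem_cons_self i s)),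
      ih (fun j hj => hf j (Finset.mem_cons_of_mem hj))]

lemma dp_sum_right {I K : Type*} [Fintype I] [Fintype K] (u : I → ℝ) (v : K → I → ℝ) :
    u ⬝ᵥ ∑ k, v k = ∑ k, u ⬝ᵥ v k := by
  simp only [dotProduct, Finset.sum_apply, Finset.mul_sum]
  exact Finset.sum_comm

lemma dp_sum_left {I K : Type*} [Fintype I] [Fintype K] (u : I → ℝ) (v : K → I → ℝ) :
    (∑ k, v k) ⬝ᵥ u = ∑ k, v k ⬝ᵥ u := by
  simp only [dotProduct, Finset.sum_apply, Finset.sum_mul]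
  exact Finset.sum_comm

lemma bessel_dot {I K : Type*} [Fintype I] [Fintype K]
    (f : K → I → ℝ) (horth : ∀ k l, k ≠ l → f k ⬝ᵥ f l = 0)
    (hnorm : ∀ k, f k ⬝ᵥ f k ≤ 1) (u : I → ℝ) :
    ∑ k, (u ⬝ᵥ f k) ^ 2 ≤ u ⬝ᵥ u := by
  set c : K → ℝ := fun k => u ⬝ᵥ f k with hc
  have key : (0:ℝ) ≤ (u - ∑ k, c k • f k) ⬝ᵥ (u - ∑ k, c k • f k) := by
    apply Finset.sum_nonneg; intro i _; exact mul_self_nonneg _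
  have hdiag : ∀ k : K, (∑ l, c k * c l * (f k ⬝ᵥ f l)) = c k ^ 2 * (f k ⬝ᵥ f k) := by
    intro k
    rw [Finset.sum_eq_single k]
    · ring
    · intro l _ hlk; rw [horth k l (Ne.symm hlk)]; ring
    · intro h; exact absurd (Finset.mem_univ k) h
  have expand : (u - ∑ k, c k • f k) ⬝ᵥ (u - ∑ k, c k • f k)
      = u ⬝ᵥ u - 2 * ∑ k, c k ^ 2 + ∑ k, c k ^ 2 * (f k ⬝ᵥ f k) := by
    rw [sub_dotProduct, dotProduct_sub, dotProduct_sub, dp_sum_right, dp_sum_left]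
    simp only [smul_dotProduct, dotProduct_smul, smul_eq_mul, dotProduct_sub]
    have h0 : ∀ k : K, u ⬝ᵥ f k = c k := fun _ => rfl
    have h1 : ∀ k : K, c k * (f k ⬝ᵥ u) = c k ^ 2 := by
      intro k; rw [dotProduct_comm, h0]; ring
    have h2 : ∀ k : K, c k * (u ⬝ᵥ f k) = c k ^ 2 := by
      intro k; rw [h0]; ring
    have h3 : ∀ k : K, c k * (f k ⬝ᵥ ∑ l, c l • f l) = ∑ l, c k * c l * (f k ⬝ᵥ f l) := by
      intro k; rw [dp_sum_right, Finset.mul_sum]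
      refine Finset.sum_congr rfl fun l _ => ?_
      rw [dotProduct_smul, smul_eq_mul]; ring
    have h4 : (∑ k, c k • f k) ⬝ᵥ (∑ l, c l • f l) = ∑ k, c k ^ 2 * (f k ⬝ᵥ f k) := by
      rw [dp_sum_left]
      refine Finset.sum_congr rfl fun k _ => ?_
      rw [smul_dotProduct, smul_eq_mul, h3, hdiag]
    simp only [h1, h2, h3, hdiag, h4]
    ring
  rw [expand] at key
  have hle : ∑ k, c k ^ 2 * (f k ⬝ᵥ f k) ≤ ∑ k, c k ^ 2 := by
    refine Finset.sum_le_sum fun k _ => ?_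
    calc c k ^ 2 * (f k ⬝ᵥ f k) ≤ c k ^ 2 * 1 :=
          mul_le_mul_of_nonneg_left (hnorm k) (sq_nonneg _)
      _ = c k ^ 2 := mul_one _
  linarith

lemma dot_self_nonneg {I : Type*} [Fintype I] (x : I → ℝ) : 0 ≤ x ⬝ᵥ x :=
  Finset.sum_nonneg fun i _ => mul_self_nonneg _

lemma traceNorm_sum_rank_one {I J K : Type*} [Fintype I] [Fintype J] [Fintype K] [DecidableEq J]
    (w : K → ℝ) (hw : ∀ k, 0 ≤ w k) (u : K → I → ℝ) (v : K → J → ℝ) :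
    traceNorm (∑ k, w k • Matrix.vecMulVec (u k) (v k)) ≤
      ∑ k, w k * Real.sqrt (u k ⬝ᵥ u k) * Real.sqrt (v k ⬝ᵥ v k) := by
  set M : Matrix I J ℝ := ∑ k, w k • Matrix.vecMulVec (u k) (v k) with hM
  have hN := Matrix.posSemidef_conjTranspose_mul_self M
  set b := hN.1.eigenvectorBasis with hb
  set e : J → J → ℝ := fun j => ⇑(b j) with he
  set μ : J → ℝ := hN.1.eigenvalues with hμdef
  have hμ : ∀ j, 0 ≤ μ j := hN.eigenvalues_nonneg
  have heig : ∀ j, (Mᴴ * M) *ᵥ e j = μ j • e j := fun j => hN.1.mulVec_eigenvectorBasis j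
  -- orthonormality as dot products
  have hinner : ∀ (x y : EuclideanSpace ℝ J), (inner ℝ x y : ℝ) = (⇑x) ⬝ᵥ (⇑y) := by
    intro x y
    simp [PiLp.inner_apply, RCLike.inner_apply, dotProduct, mul_comm]
  have horthe : ∀ j l, e j ⬝ᵥ e l = if j = l then 1 else 0 := by
    intro j l
    have := (orthonormal_iff_ite.mp b.orthonormal) j l
    rw [hinner] at this
    simpa using this
  set g : J → I → ℝ := fun j => M *ᵥ e j with hgdef
  have hg : ∀ j l, g j ⬝ᵥ g l = if j = l then μ j else 0 := by
    intro j l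
    have h1 : e j ⬝ᵥ ((Mᴴ * M) *ᵥ e l) = g j ⬝ᵥ g l := by
      rw [← Matrix.mulVec_mulVec]
      rw [Matrix.dotProduct_mulVec]
      congr 1
      have : (Mᴴ : Matrix J I ℝ) = Mᵀ := by
        ext i j'; simp [Matrix.conjTranspose_apply]
      rw [this, Matrix.vecMul_transpose]
    have h2 : e j ⬝ᵥ ((Mᴴ * M) *ᵥ e l) = μ l * (e j ⬝ᵥ e l) := by
      rw [heig, dotProduct_smul, smul_eq_mul]
    rw [← h1, h2, horthe]
    by_cases hjl : j = l
    · subst hjl; simp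
    · simp [hjl]
  have hgg : ∀ j, g j ⬝ᵥ g j = μ j := fun j => by rw [hg]; simp
  set f : J → I → ℝ := fun j => (Real.sqrt (g j ⬝ᵥ g j))⁻¹ • g j with hfdef
  have hfg : ∀ j, f j ⬝ᵥ g j = Real.sqrt (g j ⬝ᵥ g j) := by
    intro j
    rw [hfdef]
    simp only [smul_dotProduct, smul_eq_mul]
    by_cases h : Real.sqrt (g j ⬝ᵥ g j) = 0
    · have h0 : g j ⬝ᵥ g j = 0 := by
        have := Real.sq_sqrt (dot_self_nonneg (g j))
        rw [h] at this; simpa using this.symm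
      rw [h0]; simp
    · have hsq : Real.sqrt (g j ⬝ᵥ g j) * Real.sqrt (g j ⬝ᵥ g j) = g j ⬝ᵥ g j :=
        Real.mul_self_sqrt (dot_self_nonneg (g j))
      rw [← hsq]
      field_simp
      rw [Real.sqrt_sq (Real.sqrt_nonneg _)]
  have horthf : ∀ j l, j ≠ l → f j ⬝ᵥ f l = 0 := by
    intro j l hjl
    rw [hfdef]
    simp only [smul_dotProduct, dotProduct_smul, smul_eq_mul]
    rw [hg j l, if_neg hjl]; ring
  have hnormf : ∀ j, f j ⬝ᵥ f j ≤ 1 := by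
    intro j
    rw [hfdef]
    simp only [smul_dotProduct, dotProduct_smul, smul_eq_mul]
    by_cases h : Real.sqrt (g j ⬝ᵥ g j) = 0
    · rw [h]; simp
    · set s := Real.sqrt (g j ⬝ᵥ g j) with hs
      have hsq : s * s = g j ⬝ᵥ g j := Real.mul_self_sqrt (dot_self_nonneg (g j))
      rw [← hsq]
      field_simp
      exact le_refl _
  -- Parseval
  have parseval : ∀ x : J → ℝ, ∑ j, (x ⬝ᵥ e j) ^ 2 = x ⬝ᵥ x := by
    intro x
    have this := b.sum_inner_mul_inner ((WithLp.equiv 2 (J → ℝ)).symm x) ((WithLp.equiv 2 (J → ℝ)).symm x)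
    simp only [hinner] at this
    have this2 : ∑ j, (x ⬝ᵥ e j) * (e j ⬝ᵥ x) = x ⬝ᵥ x := this
    calc ∑ j, (x ⬝ᵥ e j) ^ 2 = ∑ j, (x ⬝ᵥ e j) * (e j ⬝ᵥ x) := by
          refine Finset.sum_congr rfl fun j _ => ?_
          rw [dotProduct_comm (e j) x]; ring
      _ = x ⬝ᵥ x := this2
  -- expansion of g
  have hgexp : ∀ j, g j = ∑ k, (w k * (v k ⬝ᵥ e j)) • u k := by
    intro j
    funext i
    show (M *ᵥ e j) i = _
    rw [hM]
    simp only [Matrix.mulVec, dotProduct, Matrix.sum_apply, Matrix.smul_apply,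
      Matrix.vecMulVec_apply, Pi.smul_apply, smul_eq_mul, Finset.sum_apply,
      Finset.sum_mul, Finset.mul_sum]
    rw [Finset.sum_comm]
    refine Finset.sum_congr rfl fun k _ => Finset.sum_congr rfl fun c _ => ?_
    ring
  -- main computation
  have htn : traceNorm M = ∑ j, f j ⬝ᵥ g j := by
    unfold traceNorm singVals
    refine Finset.sum_congr rfl fun j _ => ?_
    rw [hfg, hgg]
  rw [htn]
  have hstep : ∀ j, f j ⬝ᵥ g j = ∑ k, w k * ((v k ⬝ᵥ e j) * (f j ⬝ᵥ u k)) := by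
    intro j
    rw [hgexp j, dp_sum_right]
    refine Finset.sum_congr rfl fun k _ => ?_
    rw [dotProduct_smul, smul_eq_mul]; ring
  calc ∑ j, f j ⬝ᵥ g j = ∑ k, w k * ∑ j, (v k ⬝ᵥ e j) * (f j ⬝ᵥ u k) := by
        simp only [hstep]
        rw [Finset.sum_comm]
        exact Finset.sum_congr rfl fun k _ => (Finset.mul_sum _ _ _).symm
    _ ≤ ∑ k, w k * Real.sqrt (u k ⬝ᵥ u k) * Real.sqrt (v k ⬝ᵥ v k) := by
        refine Finset.sum_le_sum fun k _ => ?_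
        rw [mul_assoc]
        refine mul_le_mul_of_nonneg_left ?_ (hw k)
        have hcs : (∑ j, (v k ⬝ᵥ e j) * (f j ⬝ᵥ u k)) ^ 2 ≤
            (∑ j, (v k ⬝ᵥ e j) ^ 2) * ∑ j, (f j ⬝ᵥ u k) ^ 2 :=
          Finset.sum_mul_sq_le_sq_mul_sq _ _ _
        have hbessel : ∑ j, (f j ⬝ᵥ u k) ^ 2 ≤ u k ⬝ᵥ u k := by
          have := bessel_dot f horthf hnormf (u k)
          calc ∑ j, (f j ⬝ᵥ u k) ^ 2 = ∑ j, (u k ⬝ᵥ f j) ^ 2 := by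
                refine Finset.sum_congr rfl fun j _ => by rw [dotProduct_comm]
            _ ≤ u k ⬝ᵥ u k := this
        calc ∑ j, (v k ⬝ᵥ e j) * (f j ⬝ᵥ u k)
            ≤ |∑ j, (v k ⬝ᵥ e j) * (f j ⬝ᵥ u k)| := le_abs_self _
          _ = Real.sqrt ((∑ j, (v k ⬝ᵥ e j) * (f j ⬝ᵥ u k)) ^ 2) := (Real.sqrt_sq_eq_abs _).symm
          _ ≤ Real.sqrt ((∑ j, (v k ⬝ᵥ e j) ^ 2) * ∑ j, (f j ⬝ᵥ u k) ^ 2) :=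
              Real.sqrt_le_sqrt hcs
          _ ≤ Real.sqrt ((v k ⬝ᵥ v k) * (u k ⬝ᵥ u k)) := by
              apply Real.sqrt_le_sqrt
              rw [parseval (v k)]
              exact mul_le_mul_of_nonneg_left hbessel (dot_self_nonneg _)
          _ = Real.sqrt (u k ⬝ᵥ u k) * Real.sqrt (v k ⬝ᵥ v k) := by
              rw [Real.sqrt_mul (dot_self_nonneg _), mul_comm]


lemma site_bound {d : ℕ} (hd : 2 ≤ d) {m : ℕ} (lam : Fin m → Matrix (Fin d) (Fin d) ℂ)
    (hherm : ∀ i, (lam i).IsHermitian) (htr : ∀ i, (lam i).trace = 0)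
    (horth : ∀ i k, (lam i * lam k).trace = if i = k then 2 else 0)
    (ψ : Fin d → ℂ) (hψ : ∑ x, Complex.normSq (ψ x) = 1) :
    ∑ i, ((Matrix.vecMulVec ψ (star ψ) * lam i).trace).re ^ 2 ≤ 2 * ((d:ℝ) - 1) / d := by
  have hdR : (2:ℝ) ≤ (d:ℝ) := by exact_mod_cast hd
  have hdpos : (0:ℝ) < (d:ℝ) := by linarith
  set ρ : Matrix (Fin d) (Fin d) ℂ := Matrix.vecMulVec ψ (star ψ) with hρdef
  have hρH : ρᴴ = ρ := by
    ext i j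
    simp [hρdef, Matrix.conjTranspose_apply, Matrix.vecMulVec_apply, mul_comm]
  have hψC : ∑ x, ψ x * star (ψ x) = 1 := by
    have h : ∀ x, ψ x * star (ψ x) = ((Complex.normSq (ψ x) : ℝ) : ℂ) := by
      intro x; rw [← starRingEnd_apply, Complex.mul_conj]
    rw [Finset.sum_congr rfl fun x _ => h x, ← Complex.ofReal_sum, hψ, Complex.ofReal_one]
  have htrρ : ρ.trace = 1 := by
    simp only [Matrix.trace, Matrix.diag, hρdef, Matrix.vecMulVec_apply, Pi.star_apply]
    exact hψC
  have htrρ2 : (ρ * ρ).trace = 1 := by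
    simp only [Matrix.trace, Matrix.diag, Matrix.mul_apply, hρdef, Matrix.vecMulVec_apply,
      Pi.star_apply]
    calc ∑ r, ∑ c, ψ r * star (ψ c) * (ψ c * star (ψ r))
        = (∑ r, ψ r * star (ψ r)) * (∑ c, ψ c * star (ψ c)) := by
          rw [Finset.sum_mul_sum]
          refine Finset.sum_congr rfl fun r _ => Finset.sum_congr rfl fun c _ => ?_
          ring
      _ = 1 := by rw [hψC]; ring
  set c : Fin m → ℝ := fun i => ((ρ * lam i).trace).re with hcdef
  have hreal : ∀ i, (ρ * lam i).trace = ((c i : ℝ) : ℂ) := by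
    intro i
    have hst : (starRingEnd ℂ) ((ρ * lam i).trace) = (ρ * lam i).trace := by
      have h1 : ((ρ * lam i)ᴴ).trace = star ((ρ * lam i).trace) := Matrix.trace_conjTranspose _
      have h2 : (ρ * lam i)ᴴ = lam i * ρ := by
        rw [Matrix.conjTranspose_mul, hρH, (hherm i)]
      rw [h2, Matrix.trace_mul_comm] at h1
      exact h1.symm
    exact (Complex.conj_eq_iff_re.mp hst).symm
  set B : Matrix (Fin d) (Fin d) ℂ := (((d:ℝ)⁻¹ : ℝ) : ℂ) • 1 with hBdef
  set C : Matrix (Fin d) (Fin d) ℂ := ∑ i, (((c i / 2 : ℝ)) : ℂ) • lam i with hCdef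
  set M : Matrix (Fin d) (Fin d) ℂ := ρ - B - C with hMdef
  have hMH : Mᴴ = M := by
    rw [hMdef, Matrix.conjTranspose_sub, Matrix.conjTranspose_sub, hρH, hBdef, hCdef]
    congr 1
    · congr 1
      rw [Matrix.conjTranspose_smul, Matrix.conjTranspose_one]
      congr 1
      simp [Complex.conj_ofReal]
    · rw [Matrix.conjTranspose_sum]
      refine Finset.sum_congr rfl fun i _ => ?_
      rw [Matrix.conjTranspose_smul, (hherm i)]
      congr 1
      simp [Complex.conj_ofReal]
  have hpos : 0 ≤ ((M * Mᴴ).trace).re := by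
    have : (M * Mᴴ).trace = ∑ r, ∑ cc, ((Complex.normSq (M r cc) : ℝ) : ℂ) := by
      simp only [Matrix.trace, Matrix.diag, Matrix.mul_apply, Matrix.conjTranspose_apply]
      refine Finset.sum_congr rfl fun r _ => Finset.sum_congr rfl fun cc _ => ?_
      rw [← Complex.mul_conj]
      rfl
    rw [this]
    have h2 : (∑ r, ∑ cc, ((Complex.normSq (M r cc) : ℝ) : ℂ))
        = (((∑ r, ∑ cc, Complex.normSq (M r cc)) : ℝ) : ℂ) := by
      push_cast; rfl
    rw [h2, Complex.ofReal_re]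
    refine Finset.sum_nonneg fun r _ => Finset.sum_nonneg fun cc _ => Complex.normSq_nonneg _
  rw [hMH] at hpos
  -- trace computations
  set S : ℝ := ∑ i, c i ^ 2 with hSdef
  have t2 : (ρ * B).trace = (((d:ℝ)⁻¹ : ℝ) : ℂ) := by
    rw [hBdef, mul_smul_comm, mul_one, Matrix.trace_smul, htrρ, smul_eq_mul, mul_one]
  have t3 : (B * ρ).trace = (((d:ℝ)⁻¹ : ℝ) : ℂ) := by
    rw [hBdef, smul_mul_assoc, one_mul, Matrix.trace_smul, htrρ, smul_eq_mul, mul_one]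
  have t4 : (ρ * C).trace = ((S / 2 : ℝ) : ℂ) := by
    rw [hCdef, Finset.mul_sum, Matrix.trace_sum]
    have h : ∀ i : Fin m, (ρ * (((c i / 2 : ℝ)) : ℂ) • lam i).trace
        = (((c i ^ 2 / 2 : ℝ)) : ℂ) := by
      intro i
      rw [mul_smul_comm, Matrix.trace_smul, hreal i, smul_eq_mul]
      push_cast; ring
    rw [Finset.sum_congr rfl fun i _ => h i, ← Complex.ofReal_sum, hSdef]
    push_cast
    rw [Finset.sum_div]
  have t5 : (C * ρ).trace = ((S / 2 : ℝ) : ℂ) := by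
    rw [Matrix.trace_mul_comm]; exact t4
  have t6 : (B * B).trace = ((((d:ℝ)⁻¹) : ℝ) : ℂ) := by
    rw [hBdef, smul_mul_assoc, one_mul, Matrix.trace_smul, Matrix.trace_smul, Matrix.trace_one,
      smul_eq_mul, smul_eq_mul]
    have : ((Fintype.card (Fin d) : ℕ) : ℂ) = ((d:ℝ) : ℂ) := by push_cast [Fintype.card_fin]; rfl
    rw [this]
    rw [← Complex.ofReal_mul, ← Complex.ofReal_mul]
    congr 1
    field_simp
  have t7 : (B * C).trace = 0 := by
    rw [hBdef, hCdef, smul_mul_assoc, one_mul, Matrix.trace_smul, Matrix.trace_sum]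
    have h : ∀ i : Fin m, ((((c i / 2 : ℝ)) : ℂ) • lam i).trace = 0 := by
      intro i; rw [Matrix.trace_smul, htr i, smul_zero]
    rw [Finset.sum_congr rfl fun i _ => h i, Finset.sum_const_zero, smul_zero]
  have t8 : (C * B).trace = 0 := by rw [Matrix.trace_mul_comm]; exact t7
  have t9 : (C * C).trace = ((S / 2 : ℝ) : ℂ) := by
    rw [hCdef, Finset.sum_mul, Matrix.trace_sum]
    have h : ∀ i : Fin m, ((((c i / 2 : ℝ)) : ℂ) • lam i * ∑ k, (((c k / 2 : ℝ)) : ℂ) • lam k).trace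
        = ((c i ^ 2 / 2 : ℝ) : ℂ) := by
      intro i
      rw [Finset.mul_sum, Matrix.trace_sum]
      have h2 : ∀ k : Fin m, ((((c i / 2 : ℝ)) : ℂ) • lam i * (((c k / 2 : ℝ)) : ℂ) • lam k).trace
          = (((c i / 2 : ℝ)) : ℂ) * (((c k / 2 : ℝ)) : ℂ) * (if i = k then 2 else 0) := by
        intro k
        rw [smul_mul_assoc, mul_smul_comm, Matrix.trace_smul, Matrix.trace_smul, horth i k,
          smul_eq_mul, smul_eq_mul]
        ring
      rw [Finset.sum_congr rfl fun k _ => h2 k]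
      rw [Finset.sum_eq_single i]
      · rw [if_pos rfl]; push_cast; ring
      · intro k _ hki; rw [if_neg (Ne.symm hki), mul_zero]
      · intro hmem; exact absurd (Finset.mem_univ i) hmem
    rw [Finset.sum_congr rfl fun i _ => h i, ← Complex.ofReal_sum, hSdef]
    push_cast
    rw [Finset.sum_div]
  -- combine
  have hexp : (M * M).trace = ((1 - (d:ℝ)⁻¹ - S / 2 : ℝ) : ℂ) := by
    rw [hMdef]
    simp only [sub_mul, mul_sub, Matrix.trace_sub]
    rw [htrρ2, t2, t3, t4, t5, t6, t7, t8, t9]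
    push_cast
    ring
  rw [hexp, Complex.ofReal_re] at hpos
  have hS : S ≤ 2 * (1 - (d:ℝ)⁻¹) := by linarith
  show S ≤ 2 * ((d:ℝ) - 1) / d
  have : 2 * (1 - (d:ℝ)⁻¹) = 2 * ((d:ℝ) - 1) / d := by field_simp
  linarith [this ▸ hS]


-- scratch: factorization lemmas
lemma double_factor {n : ℕ} {d : Fin n → ℕ} (F : ∀ j, Fin (d j) → Fin (d j) → ℂ) :
    (∏ j, ∑ x, ∑ y, F j x y)
      = ∑ r : ∀ j, Fin (d j), ∑ c : ∀ j, Fin (d j), ∏ j, F j (r j) (c j) := by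
  rw [Fintype.prod_sum (fun j x => ∑ y, F j x y)]
  refine Finset.sum_congr rfl fun r _ => ?_
  exact Fintype.prod_sum fun j y => F j (r j) y

lemma trace_vecMulVec_mul {I : Type*} [Fintype I] (x y : I → ℂ) (B : Matrix I I ℂ) :
    (Matrix.vecMulVec x y * B).trace = ∑ r, ∑ c, x r * y c * B c r := by
  simp only [Matrix.trace, Matrix.diag, Matrix.mul_apply, Matrix.vecMulVec_apply]

lemma trace_herm_real {I : Type*} [Fintype I] (lam : Matrix I I ℂ) (hherm : lam.IsHermitian)
    (ψ : I → ℂ) :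
    (Matrix.vecMulVec ψ (star ψ) * lam).trace
      = ((((Matrix.vecMulVec ψ (star ψ) * lam).trace).re : ℝ) : ℂ) := by
  set ρ := Matrix.vecMulVec ψ (star ψ) with hρdef
  have hρH : ρᴴ = ρ := by
    ext i j
    simp [hρdef, Matrix.conjTranspose_apply, Matrix.vecMulVec_apply, mul_comm]
  have hst : (starRingEnd ℂ) ((ρ * lam).trace) = (ρ * lam).trace := by
    have h1 : ((ρ * lam)ᴴ).trace = star ((ρ * lam).trace) := Matrix.trace_conjTranspose _
    have h2 : (ρ * lam)ᴴ = lam * ρ := by rw [Matrix.conjTranspose_mul, hρH, hherm]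
    rw [h2, Matrix.trace_mul_comm] at h1
    exact h1.symm
  exact (Complex.conj_eq_iff_re.mp hst).symm

lemma product_trace_factor {n : ℕ} {d : Fin n → ℕ}
    (ψ : ∀ j, Fin (d j) → ℂ) (L : ∀ j, Matrix (Fin (d j)) (Fin (d j)) ℂ)
    (B : Matrix (∀ j, Fin (d j)) (∀ j, Fin (d j)) ℂ)
    (hB : ∀ r c, B r c = ∏ j, L j (r j) (c j)) :
    (Matrix.vecMulVec (fun r : ∀ j, Fin (d j) => ∏ j, ψ j (r j))
        (star fun r : ∀ j, Fin (d j) => ∏ j, ψ j (r j)) * B).trace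
      = ∏ j, (Matrix.vecMulVec (ψ j) (star (ψ j)) * L j).trace := by
  rw [trace_vecMulVec_mul]
  simp only [hB]
  have hstar : ∀ c : ∀ j, Fin (d j),
      (star fun r : ∀ j, Fin (d j) => ∏ j, ψ j (r j)) c = ∏ j, star (ψ j (c j)) := by
    intro c
    simp only [Pi.star_apply]
    exact star_prod _ _
  have key : ∀ j, (Matrix.vecMulVec (ψ j) (star (ψ j)) * L j).trace
      = ∑ x, ∑ y, ψ j x * star (ψ j y) * L j y x := by
    intro j; rw [trace_vecMulVec_mul]; simp only [Pi.star_apply]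
  rw [Finset.prod_congr rfl fun j _ => key j,
    double_factor (fun j x y => ψ j x * star (ψ j y) * L j y x)]
  refine Finset.sum_congr rfl fun r _ => Finset.sum_congr rfl fun c _ => ?_
  rw [hstar c]
  rw [← Finset.prod_mul_distrib, ← Finset.prod_mul_distrib]

lemma pi_sum_prod_sq {n : ℕ} {d : Fin n → ℕ} (A : Finset (Fin n))
    (t : ∀ j : Fin n, Fin ((d j)^2 - 1) → ℝ) :
    ∑ r : ((j : {j // j ∈ A}) → Fin ((d j.1)^2 - 1)), ∏ j : {j // j ∈ A}, (t j.1 (r j)) ^ 2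
      = ∏ j : {j // j ∈ A}, ∑ x, t j.1 x ^ 2 :=
  (Fintype.prod_sum fun (j : {j // j ∈ A}) x => t j.1 x ^ 2).symm

lemma pi_sum_prod_sq' {n : ℕ} {d : Fin n → ℕ} (A : Finset (Fin n))
    (t : ∀ j : Fin n, Fin ((d j)^2 - 1) → ℝ) :
    ∑ r : ((j : {j // j ∉ A}) → Fin ((d j.1)^2 - 1)), ∏ j : {j // j ∉ A}, (t j.1 (r j)) ^ 2
      = ∏ j : {j // j ∉ A}, ∑ x, t j.1 x ^ 2 :=
  (Fintype.prod_sum fun (j : {j // j ∉ A}) x => t j.1 x ^ 2).symm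

set_option maxHeartbeats 1000000 in
/-- Theorem 4: If `ρ` is a fully separable density matrix on
`ℂ^{d₁} ⊗ ⋯ ⊗ ℂ^{d_n}` (a finite convex combination of fully product pure
states), then for every nonempty proper subset `A` of the subsystems, the
`A`-matricization of the full correlation tensor
`T_{i₁⋯i_n} = tr(ρ (λ^{(1)}_{i₁} ⊗ ⋯ ⊗ λ^{(n)}_{i_n}))` satisfies
`‖T_{A̲}‖_tr ≤ Π_j √(2(d_j − 1)/d_j)`.  Consequently, any state violating this
inequality for some matricization is not fully separable. -/
theorem fully_separable_matricization_trace_norm_bound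
    (n : ℕ) (d : Fin n → ℕ) (hd : ∀ j, 2 ≤ d j)
    (lam : ∀ j, Fin ((d j) ^ 2 - 1) → Matrix (Fin (d j)) (Fin (d j)) ℂ)
    (hherm : ∀ j i, (lam j i).IsHermitian)
    (htraceless : ∀ j i, (lam j i).trace = 0)
    (horth : ∀ j m k, (lam j m * lam j k).trace = if m = k then 2 else 0)
    (N : ℕ) (p : Fin N → ℝ) (hp : ∀ a, 0 ≤ p a) (hpsum : ∑ a, p a = 1)
    (ψ : Fin N → ∀ j, Fin (d j) → ℂ)
    (hψunit : ∀ a j, ∑ x, Complex.normSq (ψ a j x) = 1)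
    (ρ : Matrix (∀ j, Fin (d j)) (∀ j, Fin (d j)) ℂ)
    (hρ : ρ = ∑ a, (p a : ℂ) •
        Matrix.vecMulVec (fun r => ∏ j, ψ a j (r j)) (star fun r => ∏ j, ψ a j (r j)))
    (A : Finset (Fin n)) (hA : A.Nonempty) (hA' : A ≠ Finset.univ) :
    traceNorm (matricize A
        (fun f => ((ρ * tensorOp fun j => lam j (f j)).trace).re)) ≤
      ∏ j, Real.sqrt (2 * ((d j : ℝ) - 1) / (d j)) := by
  obtain ⟨t, htdef⟩ : ∃ t : Fin N → ∀ j, Fin ((d j)^2 - 1) → ℝ,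
      t = fun a j i => ((Matrix.vecMulVec (ψ a j) (star (ψ a j)) * lam j i).trace).re :=
    ⟨_, rfl⟩
  have hfun : (fun f : ∀ j, Fin ((d j)^2 - 1) =>
      ((ρ * tensorOp fun j => lam j (f j)).trace).re)
      = fun f => ∑ a, p a * ∏ j, t a j (f j) := by
    funext f
    rw [hρ, Finset.sum_mul, Matrix.trace_sum]
    have h1 : ∀ a : Fin N, ((p a : ℂ) • Matrix.vecMulVec (fun r : ∀ j, Fin (d j) => ∏ j, ψ a j (r j))
          (star fun r : ∀ j, Fin (d j) => ∏ j, ψ a j (r j)) * tensorOp fun j => lam j (f j)).trace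
        = ((p a * ∏ j, t a j (f j) : ℝ) : ℂ) := by
      intro a
      rw [smul_mul_assoc, Matrix.trace_smul]
      rw [product_trace_factor (ψ a) (fun j => lam j (f j))
        (tensorOp fun j => lam j (f j)) (fun r c => rfl)]
      have h2 : ∀ j, (Matrix.vecMulVec (ψ a j) (star (ψ a j)) * lam j (f j)).trace
          = ((t a j (f j) : ℝ) : ℂ) := by
        intro j; rw [htdef]; exact trace_herm_real _ (hherm j (f j)) _
      rw [Finset.prod_congr rfl fun j _ => h2 j, ← Complex.ofReal_prod]
      rw [smul_eq_mul, ← Complex.ofReal_mul]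
    rw [Finset.sum_congr rfl fun a _ => h1 a, ← Complex.ofReal_sum, Complex.ofReal_re]
  rw [hfun]
  obtain ⟨U, hUdef⟩ : ∃ U : Fin N → ((j : {j // j ∈ A}) → Fin ((d j.1)^2 - 1)) → ℝ,
      U = fun a r => ∏ j : {j // j ∈ A}, t a j.1 (r j) := ⟨_, rfl⟩
  obtain ⟨V, hVdef⟩ : ∃ V : Fin N → ((j : {j // j ∉ A}) → Fin ((d j.1)^2 - 1)) → ℝ,
      V = fun a c => ∏ j : {j // j ∉ A}, t a j.1 (c j) := ⟨_, rfl⟩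
  have hsplitP : ∀ (g : Fin n → ℝ),
      (∏ j : {j // j ∈ A}, g j.1) * (∏ j : {j // j ∉ A}, g j.1) = ∏ j, g j := by
    intro g
    convert Fintype.prod_subtype_mul_prod_subtype (fun j => j ∈ A) g using 2 <;>
      · refine Finset.prod_congr ?_ fun j _ => rfl
        congr 1
        exact Subsingleton.elim _ _
  have hmat : matricize A (fun f => ∑ a, p a * ∏ j, t a j (f j))
      = ∑ a, p a • Matrix.vecMulVec (U a) (V a) := by
    ext r c
    simp only [matricize, Matrix.sum_apply, Matrix.smul_apply, Matrix.vecMulVec_apply,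
      smul_eq_mul, hUdef, hVdef]
    refine Finset.sum_congr rfl fun a _ => ?_
    congr 1
    rw [← hsplitP (fun j => t a j (if h : j ∈ A then r ⟨j, h⟩ else c ⟨j, h⟩))]
    congr 1
    · refine Finset.prod_congr rfl fun j _ => ?_
      rw [dif_pos j.2]
    · refine Finset.prod_congr rfl fun j _ => ?_
      rw [dif_neg j.2]
  rw [hmat]
  refine le_trans (traceNorm_sum_rank_one p hp U V) ?_
  have hsite : ∀ a j, ∑ i, t a j i ^ 2 ≤ 2 * ((d j : ℝ) - 1) / (d j) := by
    intro a j; rw [htdef]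
    exact site_bound (hd j) (lam j) (hherm j) (htraceless j) (horth j) (ψ a j) (hψunit a j)
  have hBd : ∀ j, (0:ℝ) ≤ 2 * ((d j : ℝ) - 1) / (d j) := by
    intro j
    have h2 : (2:ℝ) ≤ (d j : ℝ) := by exact_mod_cast hd j
    apply div_nonneg
    · linarith
    · linarith
  have hSnn : ∀ a (j : Fin n), (0:ℝ) ≤ ∑ x, t a j x ^ 2 :=
    fun a j => Finset.sum_nonneg fun x _ => sq_nonneg _
  have hUU : ∀ a, U a ⬝ᵥ U a = ∏ j : {j // j ∈ A}, ∑ x, t a j.1 x ^ 2 := by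
    intro a
    calc U a ⬝ᵥ U a = ∑ r : ((j : {j // j ∈ A}) → Fin ((d j.1)^2 - 1)),
          ∏ j : {j // j ∈ A}, (t a j.1 (r j)) ^ 2 := by
          refine Finset.sum_congr rfl fun r _ => ?_
          rw [hUdef, ← Finset.prod_mul_distrib]
          exact Finset.prod_congr rfl fun j _ => (sq (t a j.1 (r j))).symm
      _ = ∏ j : {j // j ∈ A}, ∑ x, t a j.1 x ^ 2 := pi_sum_prod_sq A (t a)
  have hVV : ∀ a, V a ⬝ᵥ V a = ∏ j : {j // j ∉ A}, ∑ x, t a j.1 x ^ 2 := by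
    intro a
    calc V a ⬝ᵥ V a = ∑ r : ((j : {j // j ∉ A}) → Fin ((d j.1)^2 - 1)),
          ∏ j : {j // j ∉ A}, (t a j.1 (r j)) ^ 2 := by
          refine Finset.sum_congr rfl fun r _ => ?_
          rw [hVdef, ← Finset.prod_mul_distrib]
          exact Finset.prod_congr rfl fun j _ => (sq (t a j.1 (r j))).symm
      _ = ∏ j : {j // j ∉ A}, ∑ x, t a j.1 x ^ 2 := pi_sum_prod_sq' A (t a)
  have hUb : ∀ a, Real.sqrt (U a ⬝ᵥ U a)
      ≤ ∏ j : {j // j ∈ A}, Real.sqrt (2 * ((d j.1 : ℝ) - 1) / (d j.1)) := by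
    intro a
    rw [hUU a, ← sqrt_prod' _ _ (fun j _ => hBd j.1)]
    apply Real.sqrt_le_sqrt
    exact Finset.prod_le_prod (fun j _ => hSnn a j.1) (fun j _ => hsite a j.1)
  have hVb : ∀ a, Real.sqrt (V a ⬝ᵥ V a)
      ≤ ∏ j : {j // j ∉ A}, Real.sqrt (2 * ((d j.1 : ℝ) - 1) / (d j.1)) := by
    intro a
    rw [hVV a, ← sqrt_prod' _ _ (fun j _ => hBd j.1)]
    apply Real.sqrt_le_sqrt
    exact Finset.prod_le_prod (fun j _ => hSnn a j.1) (fun j _ => hsite a j.1)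
  have hsplit : (∏ j : {j // j ∈ A}, Real.sqrt (2 * ((d j.1 : ℝ) - 1) / (d j.1))) *
      (∏ j : {j // j ∉ A}, Real.sqrt (2 * ((d j.1 : ℝ) - 1) / (d j.1)))
      = ∏ j, Real.sqrt (2 * ((d j : ℝ) - 1) / (d j)) :=
    hsplitP (fun j => Real.sqrt (2 * ((d j : ℝ) - 1) / (d j)))
  calc ∑ a, p a * Real.sqrt (U a ⬝ᵥ U a) * Real.sqrt (V a ⬝ᵥ V a)
      ≤ ∑ a, p a * ∏ j, Real.sqrt (2 * ((d j : ℝ) - 1) / (d j)) := by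
        refine Finset.sum_le_sum fun a _ => ?_
        rw [mul_assoc, ← hsplit]
        refine mul_le_mul_of_nonneg_left ?_ (hp a)
        exact mul_le_mul (hUb a) (hVb a) (Real.sqrt_nonneg _)
          (Finset.prod_nonneg fun j _ => Real.sqrt_nonneg _)
    _ = ∏ j, Real.sqrt (2 * ((d j : ℝ) - 1) / (d j)) := by
        rw [← Finset.sum_mul, hpsum, one_mul]
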